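/- Stein's lemma for piecewise Lipschitz functions with finitely many discontinuities: Let X ~ N(μ, σ²) and let g : ℝ → ℝ be a function for which there exist finitely many points δ₁ < δ₂ < ... < δ_q such that g is Lipschitz on each open interval (-∞, δ₁), (δ₁, δ₂), ..., (δ_{q-1}, δ_q), (δ_q, ∞), and suppose the relevant expectations exist. Then (1/σ²)·E[(X-μ)·g(X)] = E[g'(X)] + Σ_{l=1}^{q} (lim_{γ↓δ_l} g(γ) − lim_{γ↑δ_l} g(γ)) · (1/(√(2π)σ))·exp(−(δ_l−μ)²/(2σ²)). -/

import Mathlib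

open MeasureTheory Filter ProbabilityTheory Real
open scoped NNReal ENNReal


lemma slope_seq_tendsto {c : ℝ} {f : ℝ → ℝ} (hcont : Continuous f) :
    Tendsto (fun n : ℕ => (∫ x in c..(c + 1/(n+1 : ℝ)), f x) / (1/(n+1 : ℝ)))
      atTop (nhds (f c)) := by
  have hF : HasDerivAt (fun t => ∫ x in c..t, f x) (f c) c :=
    intervalIntegral.integral_hasDerivAt_right (hcont.intervalIntegrable _ _)
      (hcont.stronglyMeasurableAtFilter _ _) hcont.continuousAt
  have hslope := hasDerivAt_iff_tendsto_slope.1 hF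
  have hd0 : ∀ n : ℕ, (0:ℝ) < 1/(n+1 : ℝ) := fun n => by positivity
  have hdlim : Tendsto (fun n : ℕ => 1/(n+1 : ℝ)) atTop (nhds 0) :=
    tendsto_one_div_add_atTop_nhds_zero_nat
  have hseq : Tendsto (fun n : ℕ => c + 1/(n+1 : ℝ)) atTop (nhdsWithin c {c}ᶜ) := by
    apply tendsto_nhdsWithin_of_tendsto_nhds_of_eventually_within
    · simpa using (tendsto_const_nhds.add hdlim)
    · exact Eventually.of_forall (fun n => by
        have := (hd0 n).ne'
        simp only [Set.mem_compl_iff, Set.mem_singleton_iff]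
        intro h
        exact this (by linarith [add_left_cancel (a := c) (by linarith : c + 1/(n+1:ℝ) = c + 0)] ))
  have := hslope.comp hseq
  refine this.congr (fun n => ?_)
  simp only [Function.comp_apply, slope_def_field, intervalIntegral.integral_same,
    sub_zero, add_sub_cancel_left]

lemma ftc_lip {f f' : ℝ → ℝ} {K : ℝ≥0} {a b : ℝ} (hab : a ≤ b)
    (hcont : Continuous f)
    (hlip : LipschitzOnWith K f (Set.Icc a (b+1)))
    (hd : ∀ᵐ x ∂(volume : Measure ℝ), x ∈ Set.Ioo a b → HasDerivAt f (f' x) x) :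
    ∫ x in Set.Ioo a b, f' x = f b - f a := by
  set d : ℕ → ℝ := fun n => 1/(n+1 : ℝ) with hdDef
  have hd0 : ∀ n : ℕ, (0:ℝ) < d n := fun n => by positivity
  have hd1 : ∀ n : ℕ, d n ≤ 1 := fun n => by
    rw [hdDef]; rw [div_le_one (by positivity)]; simp
  have hdlim : Tendsto d atTop (nhds 0) := tendsto_one_div_add_atTop_nhds_zero_nat
  set fn : ℕ → ℝ → ℝ := fun n x => (f (x + d n) - f x) / d n with hfnDef
  -- dominated convergence
  have h1 : Tendsto (fun n => ∫ x in Set.Ioo a b, fn n x) atTop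
      (nhds (∫ x in Set.Ioo a b, f' x)) := by
    refine tendsto_integral_of_dominated_convergence (fun _ => (K:ℝ)) ?_ ?_ ?_ ?_
    · intro n
      exact (((hcont.comp (continuous_id.add continuous_const)).sub hcont).div_const
        _).aestronglyMeasurable
    · exact integrableOn_const measure_Ioo_lt_top.ne
    · intro n
      filter_upwards [ae_restrict_mem measurableSet_Ioo] with x hx
      have hx1 : x ∈ Set.Icc a (b+1) := ⟨le_of_lt hx.1, by linarith [hx.2]⟩
      have hx2 : x + d n ∈ Set.Icc a (b+1) :=
        ⟨by linarith [hx.1, (hd0 n)], by linarith [hx.2, hd1 n]⟩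
      have := hlip.dist_le_mul _ hx2 _ hx1
      rw [Real.dist_eq, Real.dist_eq, add_sub_cancel_left, abs_of_pos (hd0 n)] at this
      rw [Real.norm_eq_abs, hfnDef]
      rw [abs_div, abs_of_pos (hd0 n), div_le_iff₀ (hd0 n)]
      exact this
    · filter_upwards [ae_restrict_of_ae hd, ae_restrict_mem measurableSet_Ioo]
        with x hx hxmem
      have hder := hx hxmem
      have hslope := hasDerivAt_iff_tendsto_slope.1 hder
      have hseq : Tendsto (fun n : ℕ => x + d n) atTop (nhdsWithin x {x}ᶜ) := by
        apply tendsto_nhdsWithin_of_tendsto_nhds_of_eventually_within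
        · simpa using (tendsto_const_nhds.add hdlim)
        · refine Eventually.of_forall (fun n => ?_)
          simp only [Set.mem_compl_iff, Set.mem_singleton_iff]
          intro h
          exact (hd0 n).ne' (by linarith)
      refine (hslope.comp hseq).congr (fun n => ?_)
      simp only [Function.comp_apply, slope_def_field, add_sub_cancel_left]
      rfl
  -- compute each integral
  have h2 : ∀ n, ∫ x in Set.Ioo a b, fn n x
      = ((∫ x in b..(b + d n), f x) - ∫ x in a..(a + d n), f x) / d n := by
    intro n
    have hIoo : ∫ x in Set.Ioo a b, fn n x = ∫ x in a..b, fn n x := by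
      rw [intervalIntegral.integral_of_le hab, MeasureTheory.integral_Ioc_eq_integral_Ioo]
    rw [hIoo, hfnDef]
    simp only
    rw [intervalIntegral.integral_div]
    have hi1 : IntervalIntegrable (fun x => f (x + d n)) volume a b :=
      (hcont.comp (continuous_id.add continuous_const)).intervalIntegrable _ _
    rw [intervalIntegral.integral_sub hi1 (hcont.intervalIntegrable _ _)]
    rw [intervalIntegral.integral_comp_add_right (fun x => f x)]
    have A1 : (∫ x in a..(a + d n), f x) + (∫ x in (a + d n)..(b + d n), f x)
        = ∫ x in a..(b + d n), f x :=
      intervalIntegral.integral_add_adjacent_intervals (hcont.intervalIntegrable _ _)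
        (hcont.intervalIntegrable _ _)
    have A2 : (∫ x in a..b, f x) + (∫ x in b..(b + d n), f x)
        = ∫ x in a..(b + d n), f x :=
      intervalIntegral.integral_add_adjacent_intervals (hcont.intervalIntegrable _ _)
        (hcont.intervalIntegrable _ _)
    congr 1
    linarith
  have h3 : Tendsto (fun n => ((∫ x in b..(b + d n), f x) - ∫ x in a..(a + d n), f x) / d n)
      atTop (nhds (f b - f a)) := by
    have := (slope_seq_tendsto (c := b) hcont).sub (slope_seq_tendsto (c := a) hcont)
    refine this.congr (fun n => ?_)
    rw [sub_div]
  have h1' := h1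
  simp only [h2] at h1'
  exact tendsto_nhds_unique h1' h3

lemma hasDerivAt_gpdf (μ : ℝ) {v : ℝ≥0} (hv : 0 < v) (x : ℝ) :
    HasDerivAt (gaussianPDFReal μ v) (-((x - μ)/v) * gaussianPDFReal μ v x) x := by
  have hv' : (0:ℝ) < v := hv
  have h1 : HasDerivAt (fun x : ℝ => -(x - μ)^2/(2*v)) (-((x - μ)/v)) x := by
    have h0 : HasDerivAt (fun x : ℝ => (x - μ)^2) (2*(x-μ)) x := by
      simpa using ((hasDerivAt_id x).sub_const μ).fun_pow 2
    have := (h0.neg).div_const (2*(v:ℝ))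
    refine this.congr_deriv ?_
    field_simp
  have h2 := (h1.exp).const_mul ((Real.sqrt (2 * π * v))⁻¹)
  rw [gaussianPDFReal_def]
  refine h2.congr_deriv ?_
  simp only [gaussianPDFReal]
  ring

lemma continuous_gpdf (μ : ℝ) (v : ℝ≥0) : Continuous (gaussianPDFReal μ v) := by
  rw [gaussianPDFReal_def]
  exact continuous_const.mul ((((continuous_id.sub continuous_const).pow 2).neg.div_const _).rexp)

lemma abs_mul_exp_le {w : ℝ} (hw : 0 < w) (t : ℝ) :
    |t| * Real.exp (-t^2/(2*w)) ≤ Real.sqrt w := by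
  have hs : (0:ℝ) < Real.sqrt w := Real.sqrt_pos.2 hw
  have key : |t| ≤ Real.sqrt w * Real.exp (t^2/(2*w)) := by
    have h2 : (|t| / Real.sqrt w)^2 = t^2 / w := by
      rw [div_pow, sq_abs, Real.sq_sqrt hw.le]
    have h3 := Real.add_one_le_exp ((|t| / Real.sqrt w)^2/2)
    have h1 : |t| / Real.sqrt w ≤ (|t| / Real.sqrt w)^2/2 + 1 := by
      nlinarith [sq_nonneg (|t|/Real.sqrt w - 1)]
    have h4 : |t| / Real.sqrt w ≤ Real.exp (t^2/(2*w)) := by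
      have : (|t| / Real.sqrt w)^2/2 = t^2/(2*w) := by rw [h2]; ring
      rw [← this]; linarith
    calc |t| = Real.sqrt w * (|t| / Real.sqrt w) := by field_simp
      _ ≤ Real.sqrt w * Real.exp (t^2/(2*w)) := by
          exact mul_le_mul_of_nonneg_left h4 hs.le
  have hexp : (0:ℝ) < Real.exp (t^2/(2*w)) := Real.exp_pos _
  have hrw : Real.exp (-t^2/(2*w)) = (Real.exp (t^2/(2*w)))⁻¹ := by
    rw [← Real.exp_neg]; ring_nf
  rw [hrw, mul_inv_le_iff₀ hexp]
  linarith

lemma gpdf_le (μ : ℝ) (v : ℝ≥0) (x : ℝ) :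
    gaussianPDFReal μ v x ≤ (Real.sqrt (2 * π * v))⁻¹ := by
  rw [gaussianPDFReal]
  have h1 : Real.exp (-(x - μ)^2/(2*(v:ℝ))) ≤ 1 := by
    rw [Real.exp_le_one_iff]
    rcases eq_or_ne (v:ℝ) 0 with h | h
    · simp [h]
    · apply div_nonpos_of_nonpos_of_nonneg
      · simpa using sq_nonneg (x - μ)
      · positivity
  calc (Real.sqrt (2 * π * v))⁻¹ * Real.exp (-(x - μ)^2/(2*(v:ℝ)))
      ≤ (Real.sqrt (2 * π * v))⁻¹ * 1 := by
        apply mul_le_mul_of_nonneg_left h1 (by positivity)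
    _ = _ := mul_one _

lemma abs_deriv_gpdf_le (μ : ℝ) {v : ℝ≥0} (hv : 0 < v) (x : ℝ) :
    |(-((x - μ)/v) * gaussianPDFReal μ v x)| ≤
      (Real.sqrt (2 * π * v))⁻¹ * Real.sqrt v / v := by
  have hv' : (0:ℝ) < v := hv
  rw [gaussianPDFReal, abs_mul, abs_neg, abs_div, abs_mul]
  have h2 := abs_mul_exp_le (t := x - μ) hv'
  rw [abs_of_pos hv', abs_of_pos (by positivity : (0:ℝ) < (Real.sqrt (2 * π * v))⁻¹),
    abs_of_pos (Real.exp_pos _)]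
  have hc : (0:ℝ) ≤ (Real.sqrt (2 * π * v))⁻¹ := by positivity
  calc |x - μ| / v * ((Real.sqrt (2 * π * v))⁻¹ * Real.exp (-(x - μ)^2/(2*(v:ℝ))))
      = (Real.sqrt (2 * π * v))⁻¹ * (|x - μ| * Real.exp (-(x - μ)^2/(2*(v:ℝ)))) / v := by
        ring
    _ ≤ (Real.sqrt (2 * π * v))⁻¹ * Real.sqrt v / v := by
        rw [div_le_div_iff_of_pos_right hv']
        exact mul_le_mul_of_nonneg_left h2 hc

lemma lipschitz_gpdf (μ : ℝ) {v : ℝ≥0} (hv : 0 < v) :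
    LipschitzWith ((Real.sqrt (2 * π * v))⁻¹ * Real.sqrt v / v).toNNReal
      (gaussianPDFReal μ v) := by
  apply lipschitzWith_of_nnnorm_deriv_le
    (fun x => (hasDerivAt_gpdf μ hv x).differentiableAt)
  intro x
  rw [← NNReal.coe_le_coe, coe_nnnorm, Real.coe_toNNReal _ (by positivity),
    (hasDerivAt_gpdf μ hv x).deriv, Real.norm_eq_abs]
  exact abs_deriv_gpdf_le μ hv x

lemma tendsto_exp_sq_aux (μ : ℝ) {c : ℝ} (hc : 0 < c) :
    Tendsto (fun x : ℝ => Real.exp (-(x - μ)^2 / c)) atTop (nhds 0) ∧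
    Tendsto (fun x : ℝ => Real.exp (-(x - μ)^2 / c)) atBot (nhds 0) := by
  have key : ∀ l : Filter ℝ, Tendsto (fun x : ℝ => |x - μ|) l atTop →
      Tendsto (fun x : ℝ => Real.exp (-(x - μ)^2 / c)) l (nhds 0) := by
    intro l hl
    have h1 : Tendsto (fun x : ℝ => -(x - μ)^2 / c) l atBot := by
      have h2 : Tendsto (fun x : ℝ => |x - μ|^2) l atTop :=
        (tendsto_pow_atTop (two_ne_zero)).comp hl
      have h3 : Tendsto (fun x : ℝ => (x - μ)^2) l atTop := by
        refine h2.congr (fun x => by rw [sq_abs])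
      have h4 : Tendsto (fun x : ℝ => -(x - μ)^2) l atBot :=
        tendsto_neg_atBot_iff.mpr h3
      exact h4.atBot_div_const hc
    exact Real.tendsto_exp_atBot.comp h1
  constructor
  · refine key atTop (tendsto_abs_atTop_atTop.comp ?_)
    exact tendsto_atTop_add_const_right atTop (-μ) tendsto_id |>.congr (fun x => by simp only [id_eq]; ring)
  · refine key atBot (tendsto_abs_atBot_atTop.comp ?_)
    exact tendsto_atBot_add_const_right atBot (-μ) tendsto_id |>.congr (fun x => by simp only [id_eq]; ring)

lemma gpdf_decay (μ : ℝ) {v : ℝ≥0} (hv : 0 < v) (l : Filter ℝ)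
    (hl : l = atTop ∨ l = atBot) :
    Tendsto (fun x => (1 + |x|) * gaussianPDFReal μ v x) l (nhds 0) := by
  have hv' : (0:ℝ) < v := hv
  set c₀ : ℝ := (Real.sqrt (2 * π * v))⁻¹ with hc₀
  have hc₀pos : 0 < c₀ := by rw [hc₀]; positivity
  have h2v : (0:ℝ) < 2 * v := by positivity
  have h4v : (0:ℝ) < 4 * v := by positivity
  -- pointwise bound
  have hbd : ∀ x : ℝ, (1 + |x|) * gaussianPDFReal μ v x ≤
      (1 + |μ|) * gaussianPDFReal μ v x
        + c₀ * Real.sqrt (2*v) * Real.exp (-(x - μ)^2 / (4*v)) := by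
    intro x
    have hp : gaussianPDFReal μ v x = c₀ * Real.exp (-(x - μ)^2/(2*(v:ℝ))) := rfl
    have hxle : |x| ≤ |x - μ| + |μ| := by
      calc |x| = |(x - μ) + μ| := by ring_nf
        _ ≤ |x - μ| + |μ| := abs_add_le _ _
    have hsplit : Real.exp (-(x - μ)^2/(2*(v:ℝ)))
        = Real.exp (-(x - μ)^2/(4*(v:ℝ))) * Real.exp (-(x - μ)^2/(4*(v:ℝ))) := by
      rw [← Real.exp_add]
      congr 1
      field_simp
      ring
    have hkey : |x - μ| * Real.exp (-(x - μ)^2/(4*(v:ℝ))) ≤ Real.sqrt (2*v) := by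
      have := abs_mul_exp_le (t := x - μ) h2v
      convert this using 3
      ring
    have hppos : 0 < gaussianPDFReal μ v x := gaussianPDFReal_pos μ v x hv.ne'
    have hexp4 : (0:ℝ) < Real.exp (-(x - μ)^2/(4*(v:ℝ))) := Real.exp_pos _
    calc (1 + |x|) * gaussianPDFReal μ v x
        ≤ (1 + |μ| + |x - μ|) * gaussianPDFReal μ v x := by nlinarith
      _ = (1 + |μ|) * gaussianPDFReal μ v x
          + |x - μ| * gaussianPDFReal μ v x := by ring
      _ ≤ _ := by
          apply add_le_add_right
          rw [hp, hsplit]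
          calc |x - μ| * (c₀ * (Real.exp (-(x - μ)^2/(4*(v:ℝ))) * Real.exp (-(x - μ)^2/(4*(v:ℝ)))))
              = c₀ * (|x - μ| * Real.exp (-(x - μ)^2/(4*(v:ℝ)))) * Real.exp (-(x - μ)^2/(4*(v:ℝ))) := by
                ring
            _ ≤ c₀ * Real.sqrt (2*v) * Real.exp (-(x - μ)^2 / (4*v)) := by
                apply mul_le_mul_of_nonneg_right ?_ hexp4.le
                exact mul_le_mul_of_nonneg_left hkey hc₀pos.le
  -- the bounding function tends to 0
  have hB : Tendsto (fun x => (1 + |μ|) * gaussianPDFReal μ v x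
      + c₀ * Real.sqrt (2*v) * Real.exp (-(x - μ)^2 / (4*v))) l (nhds 0) := by
    have e2 := tendsto_exp_sq_aux μ h2v
    have e4 := tendsto_exp_sq_aux μ h4v
    have hp2 : Tendsto (gaussianPDFReal μ v) l (nhds 0) := by
      have : Tendsto (fun x => c₀ * Real.exp (-(x - μ)^2/(2*(v:ℝ)))) l (nhds (c₀ * 0)) := by
        rcases hl with rfl | rfl
        · exact e2.1.const_mul c₀
        · exact e2.2.const_mul c₀
      rw [mul_zero] at this; exact this
    have hp4 : Tendsto (fun x => Real.exp (-(x - μ)^2 / (4*(v:ℝ)))) l (nhds 0) := by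
      rcases hl with rfl | rfl
      · exact e4.1
      · exact e4.2
    have := (hp2.const_mul (1 + |μ|)).add ((hp4.const_mul (c₀ * Real.sqrt (2*v))))
    simpa using this
  refine squeeze_zero (fun x => ?_) hbd hB
  have := gaussianPDFReal_pos μ v x hv.ne'
  positivity

lemma gaussianPDF_eq_coe_toNNReal (μ : ℝ) (v : ℝ≥0) :
    gaussianPDF μ v = fun x => (((gaussianPDFReal μ v x).toNNReal : ℝ≥0) : ℝ≥0∞) := by
  rfl

lemma integral_gauss_eq (μ : ℝ) {v : ℝ≥0} (hv : 0 < v) (h : ℝ → ℝ) :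
    ∫ x, h x ∂(gaussianReal μ v) = ∫ x, gaussianPDFReal μ v x * h x := by
  rw [gaussianReal_of_var_ne_zero _ hv.ne', gaussianPDF_eq_coe_toNNReal,
    integral_withDensity_eq_integral_smul
      ((measurable_gaussianPDFReal μ v).real_toNNReal) h]
  congr 1
  ext x
  rw [NNReal.smul_def, smul_eq_mul, Real.coe_toNNReal _ (gaussianPDFReal_nonneg μ v x)]

lemma integrable_gauss_iff (μ : ℝ) {v : ℝ≥0} (hv : 0 < v) (h : ℝ → ℝ) :
    Integrable h (gaussianReal μ v) ↔
      Integrable (fun x => h x * gaussianPDFReal μ v x) volume := by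
  rw [gaussianReal_of_var_ne_zero _ hv.ne',
    integrable_withDensity_iff (measurable_gaussianPDF μ v)
      (ae_of_all _ (fun x => ENNReal.ofReal_lt_top))]
  constructor <;> intro H <;> refine H.congr (ae_of_all _ (fun x => ?_)) <;>
    simp [gaussianPDF, ENNReal.toReal_ofReal (gaussianPDFReal_nonneg μ v x)]

lemma piece (μ : ℝ) {v : ℝ≥0} (hv : 0 < v) (g g' : ℝ → ℝ) (L : ℝ≥0)
    (hderiv : ∀ᵐ x ∂(volume : Measure ℝ), HasDerivAt g (g' x) x)
    {A B : ℝ} (hAB : A ≤ B) (hlip : LipschitzOnWith L g (Set.Icc A B)) :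
    ∫ x in Set.Ioo A B, (g' x * gaussianPDFReal μ v x
        - (x - μ)/v * (g x * gaussianPDFReal μ v x))
      = g B * gaussianPDFReal μ v B - g A * gaussianPDFReal μ v A := by
  set p := gaussianPDFReal μ v with hp
  obtain ⟨G, hGlip, hGeq⟩ := hlip.extend_real
  set H : ℝ → ℝ := fun x => G x * p x with hH
  have hpcont : Continuous p := continuous_gpdf μ v
  have hcont : Continuous H := hGlip.continuous.mul hpcont
  -- Lipschitz bound for H on Icc A (B+1)
  set M : ℝ := |G A| + L * (B + 1 - A) with hM
  have hGbd : ∀ x ∈ Set.Icc A (B+1), |G x| ≤ M := by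
    intro x hx
    have := hGlip.dist_le_mul x A
    rw [Real.dist_eq, Real.dist_eq] at this
    have h1 : |x - A| ≤ B + 1 - A := by
      rw [abs_of_nonneg (by linarith [hx.1])]
      linarith [hx.2]
    have h2 : |G x| - |G A| ≤ |G x - G A| := by
      exact abs_sub_abs_le_abs_sub _ _
    have h3 : (L:ℝ) * |x - A| ≤ L * (B + 1 - A) :=
      mul_le_mul_of_nonneg_left h1 L.coe_nonneg
    rw [hM]; linarith
  set Mp : ℝ := (Real.sqrt (2 * π * v))⁻¹ with hMp
  set Kp : ℝ := (Real.sqrt (2 * π * v))⁻¹ * Real.sqrt v / v with hKp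
  have hKpnn : 0 ≤ Kp := by rw [hKp]; positivity
  have hMnn : 0 ≤ M := le_trans (abs_nonneg _) (hGbd A ⟨le_refl A, by linarith⟩)
  have hplip := lipschitz_gpdf μ hv
  have hHlip : LipschitzOnWith (M * Kp + Mp * L).toNNReal H (Set.Icc A (B+1)) := by
    apply LipschitzOnWith.of_dist_le_mul
    intro x hx y hy
    have hGl := hGlip.dist_le_mul x y
    have hpl := hplip.dist_le_mul x y
    rw [Real.dist_eq] at hGl hpl ⊢
    rw [Real.coe_toNNReal _ (by positivity)]
    rw [Real.coe_toNNReal _ hKpnn] at hpl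
    have hpbd : |p y| ≤ Mp := by
      rw [abs_of_pos (gaussianPDFReal_pos μ v y hv.ne')]
      exact gpdf_le μ v y
    have expand : H x - H y = G x * (p x - p y) + p y * (G x - G y) := by
      rw [hH]; ring
    calc |H x - H y| ≤ |G x| * |p x - p y| + |p y| * |G x - G y| := by
          rw [expand]
          refine le_trans (abs_add_le _ _) ?_
          rw [abs_mul, abs_mul]
      _ ≤ M * (Kp * |x - y|) + Mp * ((L:ℝ) * |x - y|) := by
          apply add_le_add
          · exact mul_le_mul (hGbd x hx) hpl (abs_nonneg _) hMnn
          · exact mul_le_mul hpbd hGl (abs_nonneg _) (by rw [hMp]; positivity)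
      _ = (M * Kp + Mp * L) * |x - y| := by ring
  -- a.e. derivative of H on Ioo A B
  have hae : ∀ᵐ x ∂(volume : Measure ℝ), x ∈ Set.Ioo A B →
      HasDerivAt H (g' x * p x - (x - μ)/v * (g x * p x)) x := by
    filter_upwards [hderiv] with x hx hmem
    have hGg : G =ᶠ[nhds x] g :=
      Filter.eventuallyEq_of_mem (isOpen_Ioo.mem_nhds hmem)
        (fun y hy => (hGeq (Set.Ioo_subset_Icc_self hy)).symm)
    have hG : HasDerivAt G (g' x) x := hx.congr_of_eventuallyEq hGg
    have := hG.mul (hasDerivAt_gpdf μ hv x)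
    have hx' : G x = g x := (hGeq (Set.Ioo_subset_Icc_self hmem)).symm
    refine this.congr_deriv ?_
    rw [hx']
    ring
  have := ftc_lip hAB hcont hHlip hae
  rw [this]
  show G B * p B - G A * p A = g B * p B - g A * p A
  rw [← hGeq ⟨le_refl A, hAB⟩, ← hGeq ⟨hAB, le_refl B⟩]

lemma tendsto_setIntegral_indicator {F : ℝ → ℝ} (hF : Integrable F volume)
    (s : ℕ → Set ℝ) (hms : ∀ n, MeasurableSet (s n)) {t : Set ℝ} (hmt : MeasurableSet t)
    (hpt : ∀ᵐ x ∂(volume : Measure ℝ), ∀ᶠ n in atTop,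
      Set.indicator (s n) F x = Set.indicator t F x) :
    Tendsto (fun n => ∫ x in s n, F x) atTop (nhds (∫ x in t, F x)) := by
  have h1 : ∀ n, ∫ x in s n, F x = ∫ x, Set.indicator (s n) F x :=
    fun n => (integral_indicator (hms n)).symm
  have h2 : ∫ x in t, F x = ∫ x, Set.indicator t F x := (integral_indicator hmt).symm
  simp only [h1, h2]
  refine tendsto_integral_of_dominated_convergence (fun x => |F x|) ?_ ?_ ?_ ?_
  · exact fun n => hF.aestronglyMeasurable.indicator (hms n)
  · exact hF.abs
  · intro n
    refine ae_of_all _ (fun x => ?_)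
    rw [Real.norm_eq_abs]
    classical
    by_cases hx : x ∈ s n
    · rw [Set.indicator_of_mem hx]
    · rw [Set.indicator_of_notMem hx]
      simp [abs_nonneg]
  · filter_upwards [hpt] with x hx
    exact Tendsto.congr' (hx.mono (fun n h => h.symm)) tendsto_const_nhds

lemma seq_div_tendsto_zero {γ : ℝ} : Tendsto (fun n : ℕ => γ/(n+1)) atTop (nhds 0) := by
  have := tendsto_one_div_add_atTop_nhds_zero_nat.const_mul γ
  simpa [mul_one_div, div_eq_mul_inv] using this

lemma seq_tendsto_left (c : ℝ) {γ : ℝ} (hγ : 0 < γ) :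
    Tendsto (fun n : ℕ => c - γ/(n+1)) atTop (nhdsWithin c (Set.Iio c)) := by
  apply tendsto_nhdsWithin_of_tendsto_nhds_of_eventually_within
  · have := tendsto_const_nhds (x := c) (f := atTop (α := ℕ)) |>.sub (seq_div_tendsto_zero (γ := γ))
    simpa using this
  · refine Eventually.of_forall (fun n => ?_)
    have : (0:ℝ) < γ/(n+1) := by positivity
    simp only [Set.mem_Iio]
    linarith

lemma seq_tendsto_right (c : ℝ) {γ : ℝ} (hγ : 0 < γ) :
    Tendsto (fun n : ℕ => c + γ/(n+1)) atTop (nhdsWithin c (Set.Ioi c)) := by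
  apply tendsto_nhdsWithin_of_tendsto_nhds_of_eventually_within
  · have := tendsto_const_nhds (x := c) (f := atTop (α := ℕ)) |>.add (seq_div_tendsto_zero (γ := γ))
    simpa using this
  · refine Eventually.of_forall (fun n => ?_)
    have : (0:ℝ) < γ/(n+1) := by positivity
    simp only [Set.mem_Ioi]
    linarith

lemma S_left_approach {F : ℝ → ℝ} (hF : Integrable F volume) (c : ℝ) {γ : ℝ} (hγ : 0 < γ) :
    Tendsto (fun n : ℕ => ∫ x in Set.Iio (c - γ/(n+1)), F x) atTop
      (nhds (∫ x in Set.Iio c, F x)) := by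
  refine tendsto_setIntegral_indicator hF _ (fun n => measurableSet_Iio) measurableSet_Iio ?_
  have hne : ∀ᵐ x ∂(volume : Measure ℝ), x ≠ c := by
    refine ae_iff.2 ?_
    simp [Real.volume_singleton]
  filter_upwards [hne] with x hx
  rcases lt_or_gt_of_ne hx with hlt | hgt
  · filter_upwards [seq_div_tendsto_zero.eventually_lt_const (by linarith : (0:ℝ) < c - x)]
      with n hn
    rw [Set.indicator_of_mem (by simp only [Set.mem_Iio]; linarith),
      Set.indicator_of_mem (by simpa using hlt)]
  · refine Eventually.of_forall (fun n => ?_)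
    have : (0:ℝ) < γ/(n+1) := by positivity
    rw [Set.indicator_of_notMem (by simp only [Set.mem_Iio, not_lt]; linarith),
      Set.indicator_of_notMem (by simp only [Set.mem_Iio, not_lt]; linarith)]

lemma S_right_approach {F : ℝ → ℝ} (hF : Integrable F volume) (c : ℝ) {γ : ℝ} (hγ : 0 < γ) :
    Tendsto (fun n : ℕ => ∫ x in Set.Iio (c + γ/(n+1)), F x) atTop
      (nhds (∫ x in Set.Iio c, F x)) := by
  refine tendsto_setIntegral_indicator hF _ (fun n => measurableSet_Iio) measurableSet_Iio ?_
  have hne : ∀ᵐ x ∂(volume : Measure ℝ), x ≠ c := by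
    refine ae_iff.2 ?_
    simp [Real.volume_singleton]
  filter_upwards [hne] with x hx
  rcases lt_or_gt_of_ne hx with hlt | hgt
  · refine Eventually.of_forall (fun n => ?_)
    have : (0:ℝ) < γ/(n+1) := by positivity
    rw [Set.indicator_of_mem (by simp only [Set.mem_Iio]; linarith),
      Set.indicator_of_mem (by simpa using hlt)]
  · filter_upwards [seq_div_tendsto_zero.eventually_lt_const (by linarith : (0:ℝ) < x - c)]
      with n hn
    rw [Set.indicator_of_notMem (by simp only [Set.mem_Iio, not_lt]; linarith),
      Set.indicator_of_notMem (by simp only [Set.mem_Iio, not_lt]; linarith)]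

lemma S_tendsto_empty {F : ℝ → ℝ} (hF : Integrable F volume) (c : ℝ) :
    Tendsto (fun n : ℕ => ∫ x in Set.Iio (c - 1 - n), F x) atTop (nhds 0) := by
  have h0 : (0:ℝ) = ∫ x in (∅ : Set ℝ), F x := by simp
  rw [h0]
  refine tendsto_setIntegral_indicator hF _ (fun n => measurableSet_Iio)
    MeasurableSet.empty ?_
  refine ae_of_all _ (fun x => ?_)
  have : ∀ᶠ n : ℕ in atTop, (c - 1 - x) ≤ n := by
    exact_mod_cast Filter.eventually_ge_atTop ⌈c - 1 - x⌉₊ |>.mono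
      (fun n hn => le_trans (Nat.le_ceil _) (by exact_mod_cast hn))
  filter_upwards [this] with n hn
  rw [Set.indicator_of_notMem (by simp only [Set.mem_Iio, not_lt]; linarith),
    Set.indicator_empty]

lemma S_tendsto_univ {F : ℝ → ℝ} (hF : Integrable F volume) (c : ℝ) :
    Tendsto (fun n : ℕ => ∫ x in Set.Iio (c + 1 + n), F x) atTop (nhds (∫ x, F x)) := by
  have h0 : ∫ x, F x = ∫ x in (Set.univ : Set ℝ), F x := by
    rw [setIntegral_univ]
  rw [h0]
  refine tendsto_setIntegral_indicator hF _ (fun n => measurableSet_Iio)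
    MeasurableSet.univ ?_
  refine ae_of_all _ (fun x => ?_)
  have : ∀ᶠ n : ℕ in atTop, (x - c) ≤ n := by
    exact_mod_cast Filter.eventually_ge_atTop ⌈x - c⌉₊ |>.mono
      (fun n hn => le_trans (Nat.le_ceil _) (by exact_mod_cast hn))
  filter_upwards [this] with n hn
  rw [Set.indicator_of_mem (by simp only [Set.mem_Iio]; linarith),
    Set.indicator_of_mem (Set.mem_univ x)]
set_option maxHeartbeats 3200000 in
theorem stmt2 (μ : ℝ) (σ : NNReal) (hσ : 0 < σ) (q : ℕ) (hq : 0 < q)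
    (δ : Fin q → ℝ) (hδ : StrictMono δ) (g g' : ℝ → ℝ) (L : ℝ) (hL : 0 ≤ L)
    (hLip : ∀ x y : ℝ, x ≤ y → (∀ l : Fin q, δ l ∉ Set.Icc x y) →
      |g y - g x| ≤ L * |y - x|)
    (gp gm : Fin q → ℝ)
    (hgp : ∀ l : Fin q,
      Filter.Tendsto g (nhdsWithin (δ l) (Set.Ioi (δ l))) (nhds (gp l)))
    (hgm : ∀ l : Fin q,
      Filter.Tendsto g (nhdsWithin (δ l) (Set.Iio (δ l))) (nhds (gm l)))
    (hderiv : ∀ᵐ x ∂(gaussianReal μ (σ ^ 2)), HasDerivAt g (g' x) x)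
    (hint1 : Integrable g' (gaussianReal μ (σ ^ 2)))
    (hint2 : Integrable (fun x => (x - μ) * g x) (gaussianReal μ (σ ^ 2))) :
    (1 / (σ : ℝ) ^ 2) * ∫ x, (x - μ) * g x ∂(gaussianReal μ (σ ^ 2)) =
      (∫ x, g' x ∂(gaussianReal μ (σ ^ 2))) +
        ∑ l : Fin q, (gp l - gm l) * (1 / (Real.sqrt (2 * π) * σ)) *
          Real.exp (-(δ l - μ) ^ 2 / (2 * (σ : ℝ) ^ 2)) := by
  set v : ℝ≥0 := σ ^ 2 with hvdef
  have hv : 0 < v := pow_pos hσ 2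
  have hvR : ((v : ℝ≥0) : ℝ) = (σ : ℝ) ^ 2 := by rw [hvdef]; push_cast; ring
  have hvR' : (0:ℝ) < (v:ℝ) := hv
  set p : ℝ → ℝ := gaussianPDFReal μ v with hpdef
  have hppos : ∀ x, 0 < p x := fun x => gaussianPDFReal_pos μ v x hv.ne'
  have hpcont : Continuous p := continuous_gpdf μ v
  have habs : (volume : Measure ℝ) ≪ gaussianReal μ v :=
    gaussianReal_absolutelyContinuous' μ hv.ne'
  have hderivL : ∀ᵐ x ∂(volume : Measure ℝ), HasDerivAt g (g' x) x :=
    hderiv.filter_mono habs.ae_le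
  have I1 : Integrable (fun x => g' x * p x) volume :=
    (integrable_gauss_iff μ hv g').1 hint1
  have I2 : Integrable (fun x => ((x - μ) * g x) * p x) volume :=
    (integrable_gauss_iff μ hv _).1 hint2
  set F : ℝ → ℝ := fun x => g' x * p x - (x - μ)/(v:ℝ) * (g x * p x) with hFdef
  have hFeq : F = fun x => g' x * p x - (1/(v:ℝ)) * (((x - μ) * g x) * p x) := by
    funext x
    rw [hFdef]
    field_simp
  have hFint : Integrable F volume := by
    rw [hFeq]
    exact I1.sub (I2.const_mul _)
  set S : ℝ → ℝ := fun t => ∫ x in Set.Iio t, F x with hSdef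
  -- Lipschitz on δ-free intervals
  have hlipOn : ∀ a b : ℝ, (∀ l : Fin q, δ l ∉ Set.Icc a b) →
      LipschitzOnWith L.toNNReal g (Set.Icc a b) := by
    intro a b hfree
    apply LipschitzOnWith.of_dist_le_mul
    intro x hx y hy
    rw [Real.dist_eq, Real.dist_eq, Real.coe_toNNReal _ hL]
    rcases le_total x y with hxy | hyx
    · have h1 : ∀ l : Fin q, δ l ∉ Set.Icc x y := fun l hl =>
        hfree l ⟨le_trans hx.1 hl.1, le_trans hl.2 hy.2⟩
      have := hLip x y hxy h1
      rwa [abs_sub_comm (g y), abs_sub_comm y] at this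
    · have h1 : ∀ l : Fin q, δ l ∉ Set.Icc y x := fun l hl =>
        hfree l ⟨le_trans hy.1 hl.1, le_trans hl.2 hx.2⟩
      exact hLip y x hyx h1
  -- increments of S
  have hSdiff : ∀ a b : ℝ, a ≤ b → S b - S a = ∫ x in Set.Ioo a b, F x := by
    intro a b hab
    have hunion : Set.Iio a ∪ Set.Ico a b = Set.Iio b := Set.Iio_union_Ico_eq_Iio hab
    have hdisj : Disjoint (Set.Iio a) (Set.Ico a b) := by
      rw [Set.disjoint_left]
      intro x hx hx2
      exact absurd hx2.1 (not_le.2 hx)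
    have := setIntegral_union hdisj measurableSet_Ico
      (hFint.integrableOn) (hFint.integrableOn) (f := F)
    rw [hunion] at this
    rw [hSdef]
    simp only
    rw [this, integral_Ico_eq_integral_Ioo]
    ring
  -- constancy of W on δ-free intervals
  have hWconst : ∀ a b : ℝ, a ≤ b → (∀ l : Fin q, δ l ∉ Set.Icc a b) →
      S b - g b * p b = S a - g a * p a := by
    intro a b hab hfree
    have hpiece := piece μ hv g g' L.toNNReal hderivL hab (hlipOn a b hfree)
    have hd := hSdiff a b hab
    rw [hpiece] at hd
    linarith
  -- extreme points
  have h0q : (0:ℕ) < q := hq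
  have hq1 : q - 1 < q := Nat.sub_lt hq one_pos
  set l0 : Fin q := ⟨0, h0q⟩ with hl0
  set lm : Fin q := ⟨q - 1, hq1⟩ with hlm
  have hδ0le : ∀ l : Fin q, δ l0 ≤ δ l := by
    intro l
    exact hδ.monotone (by simp [hl0, Fin.le_def])
  have hδmle : ∀ l : Fin q, δ l ≤ δ lm := by
    intro l
    apply hδ.monotone
    rw [Fin.le_def]
    simp only [hlm]
    omega
  -- tail decay at -infty along a_n = δ l0 - 1 - n
  have seqA : Tendsto (fun n : ℕ => δ l0 - 1 - (n:ℝ)) atTop atBot := by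
    have h1 : Tendsto (fun n : ℕ => -(n:ℝ)) atTop atBot :=
      tendsto_neg_atBot_iff.2 tendsto_natCast_atTop_atTop
    have := tendsto_atBot_add_const_left atTop (δ l0 - 1) h1
    refine this.congr (fun n => by ring)
  have seqB : Tendsto (fun n : ℕ => δ lm + 1 + (n:ℝ)) atTop atTop := by
    have := tendsto_atTop_add_const_left atTop (δ lm + 1) tendsto_natCast_atTop_atTop
    exact this
  have tailL : Tendsto (fun n : ℕ => g (δ l0 - 1 - (n:ℝ)) * p (δ l0 - 1 - (n:ℝ)))
      atTop (nhds 0) := by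
    set CL : ℝ := |g (δ l0 - 1)| + L * |δ l0 - 1| + L with hCL
    have hgbd : ∀ x : ℝ, x ≤ δ l0 - 1 → |g x| ≤ CL * (1 + |x|) := by
      intro x hx
      have hfree : ∀ l : Fin q, δ l ∉ Set.Icc x (δ l0 - 1) := by
        intro l hl
        have := hδ0le l
        have := hl.2
        linarith
      have h1 := hLip x (δ l0 - 1) hx hfree
      have h2 : |g x| ≤ |g (δ l0 - 1)| + L * |δ l0 - 1 - x| := by
        have := abs_sub_abs_le_abs_sub (g x) (g (δ l0 - 1))
        have h3 : |g x - g (δ l0 - 1)| = |g (δ l0 - 1) - g x| := abs_sub_comm _ _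
        linarith
      have h4 : |δ l0 - 1 - x| ≤ |δ l0 - 1| + |x| := abs_sub _ _
      have h5 : (0:ℝ) ≤ |x| := abs_nonneg _
      have h6 : (0:ℝ) ≤ |g (δ l0 - 1)| := abs_nonneg _
      have h7 : (0:ℝ) ≤ |δ l0 - 1| := abs_nonneg _
      rw [hCL]
      nlinarith [mul_le_mul_of_nonneg_left h4 hL, mul_nonneg h6 h5,
        mul_nonneg (mul_nonneg hL h7) h5, mul_nonneg hL h5]
    have hCLnn : 0 ≤ CL := by
      have := abs_nonneg (g (δ l0 - 1))
      have := abs_nonneg (δ l0 - 1)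
      have := mul_nonneg hL (abs_nonneg (δ l0 - 1))
      rw [hCL]; linarith
    have hdecay : Tendsto (fun n : ℕ =>
        CL * ((1 + |δ l0 - 1 - (n:ℝ)|) * p (δ l0 - 1 - (n:ℝ)))) atTop (nhds 0) := by
      have := ((gpdf_decay μ hv atBot (Or.inr rfl)).comp seqA).const_mul CL
      simpa using this
    refine squeeze_zero_norm (fun n => ?_) hdecay
    have hx : δ l0 - 1 - (n:ℝ) ≤ δ l0 - 1 := by
      have : (0:ℝ) ≤ n := Nat.cast_nonneg n
      linarith
    rw [Real.norm_eq_abs, abs_mul, abs_of_pos (hppos _)]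
    calc |g (δ l0 - 1 - (n:ℝ))| * p (δ l0 - 1 - (n:ℝ))
        ≤ (CL * (1 + |δ l0 - 1 - (n:ℝ)|)) * p (δ l0 - 1 - (n:ℝ)) :=
          mul_le_mul_of_nonneg_right (hgbd _ hx) (hppos _).le
      _ = CL * ((1 + |δ l0 - 1 - (n:ℝ)|) * p (δ l0 - 1 - (n:ℝ))) := by ring
  have tailR : Tendsto (fun n : ℕ => g (δ lm + 1 + (n:ℝ)) * p (δ lm + 1 + (n:ℝ)))
      atTop (nhds 0) := by
    set CR : ℝ := |g (δ lm + 1)| + L * |δ lm + 1| + L with hCR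
    have hgbd : ∀ x : ℝ, δ lm + 1 ≤ x → |g x| ≤ CR * (1 + |x|) := by
      intro x hx
      have hfree : ∀ l : Fin q, δ l ∉ Set.Icc (δ lm + 1) x := by
        intro l hl
        have := hδmle l
        have := hl.1
        linarith
      have h1 := hLip (δ lm + 1) x hx hfree
      have h2 : |g x| ≤ |g (δ lm + 1)| + L * |x - (δ lm + 1)| := by
        have := abs_sub_abs_le_abs_sub (g x) (g (δ lm + 1))
        linarith
      have h4 : |x - (δ lm + 1)| ≤ |x| + |δ lm + 1| := abs_sub _ _
      have h5 : (0:ℝ) ≤ |x| := abs_nonneg _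
      have h6 : (0:ℝ) ≤ |g (δ lm + 1)| := abs_nonneg _
      have h7 : (0:ℝ) ≤ |δ lm + 1| := abs_nonneg _
      rw [hCR]
      nlinarith [mul_le_mul_of_nonneg_left h4 hL, mul_nonneg h6 h5,
        mul_nonneg (mul_nonneg hL h7) h5, mul_nonneg hL h5]
    have hCRnn : 0 ≤ CR := by
      have := abs_nonneg (g (δ lm + 1))
      have := abs_nonneg (δ lm + 1)
      have := mul_nonneg hL (abs_nonneg (δ lm + 1))
      rw [hCR]; linarith
    have hdecay : Tendsto (fun n : ℕ =>
        CR * ((1 + |δ lm + 1 + (n:ℝ)|) * p (δ lm + 1 + (n:ℝ)))) atTop (nhds 0) := by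
      have := ((gpdf_decay μ hv atTop (Or.inl rfl)).comp seqB).const_mul CR
      simpa using this
    refine squeeze_zero_norm (fun n => ?_) hdecay
    have hx : δ lm + 1 ≤ δ lm + 1 + (n:ℝ) := by
      have : (0:ℝ) ≤ n := Nat.cast_nonneg n
      linarith
    rw [Real.norm_eq_abs, abs_mul, abs_of_pos (hppos _)]
    calc |g (δ lm + 1 + (n:ℝ))| * p (δ lm + 1 + (n:ℝ))
        ≤ (CR * (1 + |δ lm + 1 + (n:ℝ)|)) * p (δ lm + 1 + (n:ℝ)) :=
          mul_le_mul_of_nonneg_right (hgbd _ hx) (hppos _).le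
      _ = CR * ((1 + |δ lm + 1 + (n:ℝ)|) * p (δ lm + 1 + (n:ℝ))) := by ring
  -- left anchor
  have claim0 : S (δ l0) - gm l0 * p (δ l0) = 0 := by
    have heq : ∀ n : ℕ, S (δ l0 - 1/((n:ℝ)+1)) - g (δ l0 - 1/((n:ℝ)+1)) * p (δ l0 - 1/((n:ℝ)+1))
        = S (δ l0 - 1 - (n:ℝ)) - g (δ l0 - 1 - (n:ℝ)) * p (δ l0 - 1 - (n:ℝ)) := by
      intro n
      have hd1 : (0:ℝ) < 1/((n:ℝ)+1) := by positivity
      have hd2 : 1/((n:ℝ)+1) ≤ 1 := by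
        rw [div_le_one (by positivity)]
        simp
      refine hWconst _ _ (by push_cast; linarith [Nat.cast_nonneg (α := ℝ) n]) ?_
      intro l hl
      have := hδ0le l
      have := hl.2
      linarith
    have limA : Tendsto (fun n : ℕ => S (δ l0 - 1 - (n:ℝ)) -
        g (δ l0 - 1 - (n:ℝ)) * p (δ l0 - 1 - (n:ℝ))) atTop (nhds 0) := by
      have := (S_tendsto_empty hFint (δ l0)).sub tailL
      simpa using this
    have limB : Tendsto (fun n : ℕ => S (δ l0 - 1/((n:ℝ)+1)) -
        g (δ l0 - 1/((n:ℝ)+1)) * p (δ l0 - 1/((n:ℝ)+1))) atTop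
        (nhds (S (δ l0) - gm l0 * p (δ l0))) := by
      refine Tendsto.sub (S_left_approach hFint (δ l0) one_pos) ?_
      refine Tendsto.mul ((hgm l0).comp (seq_tendsto_left (δ l0) one_pos)) ?_
      exact hpcont.continuousAt.tendsto.comp
        ((seq_tendsto_left (δ l0) one_pos).mono_right nhdsWithin_le_nhds)
    exact (tendsto_nhds_unique (limA.congr (fun n => (heq n).symm)) limB).symm ▸ rfl
  -- middle steps
  have stepMid : ∀ (i : ℕ) (hi1 : i + 1 < q),
      S (δ ⟨i+1, hi1⟩) - gm ⟨i+1, hi1⟩ * p (δ ⟨i+1, hi1⟩)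
        = S (δ ⟨i, Nat.lt_of_succ_lt hi1⟩) - gp ⟨i, Nat.lt_of_succ_lt hi1⟩ *
            p (δ ⟨i, Nat.lt_of_succ_lt hi1⟩) := by
    intro i hi1
    set li : Fin q := ⟨i, Nat.lt_of_succ_lt hi1⟩ with hli
    set lj : Fin q := ⟨i+1, hi1⟩ with hlj
    have hlt : δ li < δ lj := hδ (by simp [hli, hlj, Fin.lt_def])
    set γ : ℝ := (δ lj - δ li)/3 with hγdef
    have hγ : 0 < γ := by rw [hγdef]; linarith
    have heq : ∀ n : ℕ, S (δ lj - γ/((n:ℝ)+1)) - g (δ lj - γ/((n:ℝ)+1)) * p (δ lj - γ/((n:ℝ)+1))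
        = S (δ li + γ/((n:ℝ)+1)) - g (δ li + γ/((n:ℝ)+1)) * p (δ li + γ/((n:ℝ)+1)) := by
      intro n
      have hd1 : (0:ℝ) < γ/((n:ℝ)+1) := by positivity
      have hd2 : γ/((n:ℝ)+1) ≤ γ := by
        rw [div_le_iff₀ (by positivity)]
        nlinarith [Nat.cast_nonneg (α := ℝ) n]
      refine hWconst _ _ (by rw [hγdef] at hd2 ⊢; linarith) ?_
      intro l hl
      rcases le_or_gt l.val i with hcase | hcase
      · have h1 : δ l ≤ δ li := hδ.monotone (by rw [Fin.le_def]; simpa [hli] using hcase)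
        have := hl.1
        linarith
      · have h1 : δ lj ≤ δ l := hδ.monotone (by rw [Fin.le_def]; simpa [hlj] using hcase)
        have := hl.2
        linarith
    have limA : Tendsto (fun n : ℕ => S (δ li + γ/((n:ℝ)+1)) -
        g (δ li + γ/((n:ℝ)+1)) * p (δ li + γ/((n:ℝ)+1))) atTop
        (nhds (S (δ li) - gp li * p (δ li))) := by
      refine Tendsto.sub (S_right_approach hFint (δ li) hγ) ?_
      refine Tendsto.mul ((hgp li).comp (seq_tendsto_right (δ li) hγ)) ?_
      exact hpcont.continuousAt.tendsto.comp
        ((seq_tendsto_right (δ li) hγ).mono_right nhdsWithin_le_nhds)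
    have limB : Tendsto (fun n : ℕ => S (δ lj - γ/((n:ℝ)+1)) -
        g (δ lj - γ/((n:ℝ)+1)) * p (δ lj - γ/((n:ℝ)+1))) atTop
        (nhds (S (δ lj) - gm lj * p (δ lj))) := by
      refine Tendsto.sub (S_left_approach hFint (δ lj) hγ) ?_
      refine Tendsto.mul ((hgm lj).comp (seq_tendsto_left (δ lj) hγ)) ?_
      exact hpcont.continuousAt.tendsto.comp
        ((seq_tendsto_left (δ lj) hγ).mono_right nhdsWithin_le_nhds)
    exact tendsto_nhds_unique (limB.congr (fun n => (heq n))) limA |>.symm ▸ rfl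
  -- right anchor
  have claimEnd : S (δ lm) - gp lm * p (δ lm) = ∫ x, F x := by
    have heq : ∀ n : ℕ, S (δ lm + 1 + (n:ℝ)) - g (δ lm + 1 + (n:ℝ)) * p (δ lm + 1 + (n:ℝ))
        = S (δ lm + 1/((n:ℝ)+1)) - g (δ lm + 1/((n:ℝ)+1)) * p (δ lm + 1/((n:ℝ)+1)) := by
      intro n
      have hd1 : (0:ℝ) < 1/((n:ℝ)+1) := by positivity
      have hd2 : 1/((n:ℝ)+1) ≤ 1 := by
        rw [div_le_one (by positivity)]
        simp
      refine hWconst _ _ (by linarith [Nat.cast_nonneg (α := ℝ) n]) ?_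
      intro l hl
      have := hδmle l
      have := hl.1
      linarith
    have limA : Tendsto (fun n : ℕ => S (δ lm + 1/((n:ℝ)+1)) -
        g (δ lm + 1/((n:ℝ)+1)) * p (δ lm + 1/((n:ℝ)+1))) atTop
        (nhds (S (δ lm) - gp lm * p (δ lm))) := by
      refine Tendsto.sub (S_right_approach hFint (δ lm) one_pos) ?_
      refine Tendsto.mul ((hgp lm).comp (seq_tendsto_right (δ lm) one_pos)) ?_
      exact hpcont.continuousAt.tendsto.comp
        ((seq_tendsto_right (δ lm) one_pos).mono_right nhdsWithin_le_nhds)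
    have limB : Tendsto (fun n : ℕ => S (δ lm + 1 + (n:ℝ)) -
        g (δ lm + 1 + (n:ℝ)) * p (δ lm + 1 + (n:ℝ))) atTop (nhds (∫ x, F x)) := by
      have := (S_tendsto_univ hFint (δ lm)).sub tailR
      simpa using this
    exact tendsto_nhds_unique (limB.congr heq) limA |>.symm
  -- telescoping
  classical
  set e : ℕ → ℝ := fun i => if h : i < q then (gm ⟨i,h⟩ - gp ⟨i,h⟩) * p (δ ⟨i,h⟩) else 0
    with hedef
  set ubar : ℕ → ℝ := fun i =>
    if h : i < q then S (δ ⟨i,h⟩) - gm ⟨i,h⟩ * p (δ ⟨i,h⟩) else ∫ x, F x with hubar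
  have hstep : ∀ i ∈ Finset.range q, ubar (i+1) - ubar i = e i := by
    intro i hi
    have hi' := Finset.mem_range.1 hi
    by_cases h2 : i + 1 < q
    · simp only [hubar, hedef, dif_pos hi', dif_pos h2]
      rw [stepMid i h2]
      ring
    · have hieq : i = q - 1 := by omega
      have hlmi : (⟨i, hi'⟩ : Fin q) = lm := by
        rw [hlm]
        exact Fin.ext (by simpa using hieq)
      simp only [hubar, hedef, dif_pos hi', dif_neg h2]
      rw [hlmi, ← claimEnd]
      ring
  have htel : ∑ i ∈ Finset.range q, e i = (∫ x, F x) - 0 := by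
    rw [← Finset.sum_congr rfl hstep, Finset.sum_range_sub ubar q]
    congr 1
    · simp only [hubar, dif_neg (lt_irrefl q)]
    · simp only [hubar, dif_pos h0q]
      exact claim0
  have hsumF : ∫ x, F x = ∑ l : Fin q, (gm l - gp l) * p (δ l) := by
    rw [← sub_zero (∫ x, F x), ← htel, ← Fin.sum_univ_eq_sum_range]
    refine Finset.sum_congr rfl (fun l _ => ?_)
    simp only [hedef, dif_pos l.isLt, Fin.eta]
  -- identify ∫ F with the gaussian integrals
  have hI1 : ∫ x, g' x ∂(gaussianReal μ v) = ∫ x, g' x * p x := by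
    rw [integral_gauss_eq μ hv g']
    exact integral_congr_ae (Filter.Eventually.of_forall (fun x => mul_comm _ _))
  have hI2 : ∫ x, (x - μ) * g x ∂(gaussianReal μ v) = ∫ x, ((x - μ) * g x) * p x := by
    rw [integral_gauss_eq μ hv _]
    exact integral_congr_ae (Filter.Eventually.of_forall (fun x => mul_comm _ _))
  have hiF : ∫ x, F x = (∫ x, g' x ∂(gaussianReal μ v))
      - (1/(v:ℝ)) * ∫ x, (x - μ) * g x ∂(gaussianReal μ v) := by
    rw [hI1, hI2, hFeq, integral_sub I1 (I2.const_mul _), MeasureTheory.integral_const_mul]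
  -- value of the pdf at the jump points
  have hpval : ∀ l : Fin q, p (δ l)
      = (1 / (Real.sqrt (2 * π) * σ)) * Real.exp (-(δ l - μ) ^ 2 / (2 * (σ:ℝ) ^ 2)) := by
    intro l
    have h1 : (2 * π * (v:ℝ)) = (2 * π) * (σ:ℝ)^2 := by rw [hvR]
    have h2 : Real.sqrt (2 * π * (v:ℝ)) = Real.sqrt (2 * π) * σ := by
      rw [h1, Real.sqrt_mul (by positivity), Real.sqrt_sq σ.coe_nonneg]
    show gaussianPDFReal μ v (δ l) = _
    rw [gaussianPDFReal, h2, hvR, one_div]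
  have hsum2 : ∑ l : Fin q, (gp l - gm l) * (1 / (Real.sqrt (2 * π) * σ)) *
      Real.exp (-(δ l - μ) ^ 2 / (2 * (σ:ℝ) ^ 2))
      = -∑ l : Fin q, (gm l - gp l) * p (δ l) := by
    rw [← Finset.sum_neg_distrib]
    refine Finset.sum_congr rfl (fun l _ => ?_)
    rw [hpval l]
    ring
  rw [hsum2]
  have hcast : (1:ℝ) / (σ:ℝ)^2 = 1/(v:ℝ) := by rw [hvR]
  rw [hcast]
  rw [hsumF] at hiF
  linarith [hiF]
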